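/- Let f : ℝ × ℝ → ℝ be continuously differentiable with ∂f/∂v > 0 everywhere. Suppose ρ₁, ρ₂ : (0,L) → ℝ are twice differentiable, ρ₁(x) ≥ ρ₂(x) on (0,L) with equality at x_c ∈ (0,L), and the functions satisfy the strict inequality (d/dx) f(ρ₁(x), ρ₁'(x))|_{x_c} < (d/dx) f(ρ₂(x), ρ₂'(x))|_{x_c}. Then a contradiction follows; i.e., no such configuration exists satisfying additionally ρ₁''(x_c) ≥ ρ₂''(x_c). -/

import Mathlib

open Set

/-- Core contradiction of Lemma 1: `f` is `C¹` with strictly positive partial derivative in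
its second argument; `ρ₁ ≥ ρ₂` on `(0,L)` with equality at an interior point `x_c`; the
spatial derivative of `f (ρ₁, ρ₁')` at `x_c` is strictly less than that of `f (ρ₂, ρ₂')`;
then the additional condition `ρ₁'' x_c ≥ ρ₂'' x_c` is contradictory. -/
theorem stmt_8 (L : ℝ) (f : ℝ × ℝ → ℝ)
    (hf : ContDiff ℝ 1 f)
    (hfv : ∀ p : ℝ × ℝ, 0 < fderiv ℝ f p (0, 1))
    (ρ₁ ρ₂ ρ₁' ρ₂' ρ₁'' ρ₂'' : ℝ → ℝ)
    (hρ₁ : ∀ x ∈ Ioo (0:ℝ) L, HasDerivAt ρ₁ (ρ₁' x) x)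
    (hρ₂ : ∀ x ∈ Ioo (0:ℝ) L, HasDerivAt ρ₂ (ρ₂' x) x)
    (hρ₁' : ∀ x ∈ Ioo (0:ℝ) L, HasDerivAt ρ₁' (ρ₁'' x) x)
    (hρ₂' : ∀ x ∈ Ioo (0:ℝ) L, HasDerivAt ρ₂' (ρ₂'' x) x)
    (hord : ∀ x ∈ Ioo (0:ℝ) L, ρ₂ x ≤ ρ₁ x)
    (x_c : ℝ) (hx_c : x_c ∈ Ioo (0:ℝ) L) (heq : ρ₁ x_c = ρ₂ x_c)
    (D₁ D₂ : ℝ)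
    (hD₁ : HasDerivAt (fun x => f (ρ₁ x, ρ₁' x)) D₁ x_c)
    (hD₂ : HasDerivAt (fun x => f (ρ₂ x, ρ₂' x)) D₂ x_c)
    (hlt : D₁ < D₂)
    (hsecond : ρ₂'' x_c ≤ ρ₁'' x_c) :
    False := by
  -- ρ₁ - ρ₂ has a local minimum at x_c, so derivatives agree there
  have hopen : Ioo (0:ℝ) L ∈ nhds x_c := (isOpen_Ioo).mem_nhds hx_c
  have hmin : IsLocalMin (fun x => ρ₁ x - ρ₂ x) x_c := by
    filter_upwards [hopen] with x hx
    have := hord x hx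
    simp only [heq]
    linarith
  have hg : HasDerivAt (fun x => ρ₁ x - ρ₂ x) (ρ₁' x_c - ρ₂' x_c) x_c :=
    (hρ₁ x_c hx_c).sub (hρ₂ x_c hx_c)
  have hder0 : ρ₁' x_c - ρ₂' x_c = 0 := hmin.hasDerivAt_eq_zero hg
  have hder : ρ₁' x_c = ρ₂' x_c := by linarith
  -- chain rule
  set p : ℝ × ℝ := (ρ₁ x_c, ρ₁' x_c) with hp
  have hfd : HasFDerivAt f (fderiv ℝ f p) p :=
    (hf.differentiable one_ne_zero p).hasFDerivAt
  have hpair1 : HasDerivAt (fun x => (ρ₁ x, ρ₁' x)) (ρ₁' x_c, ρ₁'' x_c) x_c :=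
    (hρ₁ x_c hx_c).prodMk (hρ₁' x_c hx_c)
  have hpair2 : HasDerivAt (fun x => (ρ₂ x, ρ₂' x)) (ρ₂' x_c, ρ₂'' x_c) x_c :=
    (hρ₂ x_c hx_c).prodMk (hρ₂' x_c hx_c)
  have hD₁' : HasDerivAt (fun x => f (ρ₁ x, ρ₁' x))
      (fderiv ℝ f p (ρ₁' x_c, ρ₁'' x_c)) x_c := hfd.comp_hasDerivAt x_c hpair1
  have hp2 : (ρ₂ x_c, ρ₂' x_c) = p := by rw [hp, heq, hder]
  have hD₂' : HasDerivAt (fun x => f (ρ₂ x, ρ₂' x))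
      (fderiv ℝ f p (ρ₂' x_c, ρ₂'' x_c)) x_c := by
    have := (hp2 ▸ hfd : HasFDerivAt f (fderiv ℝ f p) (ρ₂ x_c, ρ₂' x_c))
    exact this.comp_hasDerivAt x_c hpair2
  have e1 : D₁ = fderiv ℝ f p (ρ₁' x_c, ρ₁'' x_c) := hD₁.unique hD₁'
  have e2 : D₂ = fderiv ℝ f p (ρ₂' x_c, ρ₂'' x_c) := hD₂.unique hD₂'
  have hsplit : (ρ₁' x_c, ρ₁'' x_c) =
      (ρ₂' x_c, ρ₂'' x_c) + (ρ₁'' x_c - ρ₂'' x_c) • ((0:ℝ), (1:ℝ)) := by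
    rw [hder]; simp [Prod.ext_iff]
  have key : D₁ = D₂ + (ρ₁'' x_c - ρ₂'' x_c) * fderiv ℝ f p (0, 1) := by
    rw [e1, e2, hsplit, map_add, map_smul, smul_eq_mul]
  have hpos := hfv p
  nlinarith
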